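/- Let G be a graph with two indistinguishable vertices a and b. Then there exists a minimum fill-in ordering of G in which a and b are eliminated consecutively. -/

import Mathlib

open SimpleGraph

attribute [local instance] Classical.propDecidable

variable {V : Type*} [Fintype V] [DecidableEq V]

/-- The elimination graph `G_x`: delete `x` and complete its neighborhood to a clique.
(The eliminated vertex is kept as an isolated vertex.) -/
def elimG (G : SimpleGraph V) (x : V) : SimpleGraph V where
  Adj u v := u ≠ v ∧ u ≠ x ∧ v ≠ x ∧ (G.Adj u v ∨ (G.Adj x u ∧ G.Adj x v))
  symm := by
    constructor
    intro u v h
    obtain ⟨h1, h2, h3, h4⟩ := h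
    refine ⟨h1.symm, h3, h2, ?_⟩
    rcases h4 with h | ⟨h4, h5⟩
    · exact Or.inl h.symm
    · exact Or.inr ⟨h5, h4⟩
  loopless := by constructor; intro v h; exact h.1 rfl

/-- The deficiency `D(x)`: the set of unordered pairs of distinct, non-adjacent
neighbors of `x`. -/
noncomputable def deficiencyFinset (G : SimpleGraph V) (x : V) : Finset (Sym2 V) :=
  ((Finset.univ ×ˢ Finset.univ : Finset (V × V)).filter
    (fun p => p.1 ≠ p.2 ∧ G.Adj x p.1 ∧ G.Adj x p.2 ∧ ¬ G.Adj p.1 p.2)).image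
    (fun p => s(p.1, p.2))

/-- Successive elimination of a list of vertices. -/
def elimList : SimpleGraph V → List V → SimpleGraph V
  | G, [] => G
  | G, x :: xs => elimList (elimG G x) xs

/-- The fill-in of an elimination ordering given as a list: the total number of
edges added during the elimination process. -/
noncomputable def fillList : SimpleGraph V → List V → ℕ
  | _, [] => 0
  | G, x :: xs => (deficiencyFinset G x).card + fillList (elimG G x) xs

/-- The set of fill edges added during the elimination process. -/
noncomputable def fillEdges : SimpleGraph V → List V → Finset (Sym2 V)
  | _, [] => ∅
  | G, x :: xs => deficiencyFinset G x ∪ fillEdges (elimG G x) xs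

/-- A list is an (elimination) ordering if it enumerates every vertex exactly once. -/
def IsOrdering (L : List V) : Prop := L.Nodup ∧ ∀ v : V, v ∈ L

/-- The minimum fill-in `Φ(G)`. -/
noncomputable def minFillIn (G : SimpleGraph V) : ℕ :=
  sInf {n | ∃ L : List V, IsOrdering L ∧ fillList G L = n}

/-- A vertex is simplicial if its neighborhood is a clique. -/
def IsSimplicial (G : SimpleGraph V) (x : V) : Prop :=
  ∀ a b, G.Adj x a → G.Adj x b → a ≠ b → G.Adj a b

/-- `a` and `b` are indistinguishable: equal closed neighborhoods. -/
def Indistinguishable (G : SimpleGraph V) (a b : V) : Prop :=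
  a ≠ b ∧ insert a (G.neighborSet a) = insert b (G.neighborSet b)

/-- `a` and `b` are twins: equal open neighborhoods (hence non-adjacent). -/
def Twins (G : SimpleGraph V) (a b : V) : Prop :=
  a ≠ b ∧ G.neighborSet a = G.neighborSet b

/-- Chordality: no induced cycle of length at least 4, equivalently every cycle of
length at least 4 has a chord. -/
def IsChordal (G : SimpleGraph V) : Prop :=
  ∀ n : ℕ, 4 ≤ n → ∀ f : ZMod n → V, Function.Injective f →
    ¬ (∀ i j : ZMod n, G.Adj (f i) (f j) ↔ (j = i + 1 ∨ i = j + 1))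

/-- `T` is a triangulation of `G`: a set of non-edges whose addition makes `G` chordal. -/
def IsTriangulation (G : SimpleGraph V) (T : Finset (Sym2 V)) : Prop :=
  (∀ e ∈ T, ¬ e.IsDiag ∧ e ∉ G.edgeSet) ∧
    IsChordal (G ⊔ SimpleGraph.fromEdgeSet (↑T : Set (Sym2 V)))

/-- A minimum triangulation. -/
def IsMinTriangulation (G : SimpleGraph V) (T : Finset (Sym2 V)) : Prop :=
  IsTriangulation G T ∧ ∀ T' : Finset (Sym2 V), IsTriangulation G T' → T.card ≤ T'.card

/-- The graph obtained from `G` by deleting the vertices in `S`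
(deleted vertices are kept as isolated vertices). -/
def deleteSet (G : SimpleGraph V) (S : Set V) : SimpleGraph V where
  Adj u v := G.Adj u v ∧ u ∉ S ∧ v ∉ S
  symm := ⟨fun _ _ ⟨h, hu, hv⟩ => ⟨h.symm, hv, hu⟩⟩
  loopless := ⟨fun _ h => G.irrefl h.1⟩

set_option linter.unusedSectionVars false

section myaux
variable {V : Type*} [Fintype V] [DecidableEq V]

lemma elimG_adj (G : SimpleGraph V) (x u v : V) :
    (elimG G x).Adj u v ↔ u ≠ v ∧ u ≠ x ∧ v ≠ x ∧ (G.Adj u v ∨ (G.Adj x u ∧ G.Adj x v)) :=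
  Iff.rfl

lemma mem_deficiency (G : SimpleGraph V) (x : V) (e : Sym2 V) :
    e ∈ deficiencyFinset G x ↔
      ∃ u w : V, e = s(u, w) ∧ u ≠ w ∧ G.Adj x u ∧ G.Adj x w ∧ ¬ G.Adj u w := by
  simp only [deficiencyFinset, Finset.mem_image, Finset.mem_filter, Finset.mem_product,
    Finset.mem_univ, true_and, Prod.exists]
  constructor
  · rintro ⟨u, w, ⟨hne, h1, h2, h3⟩, rfl⟩; exact ⟨u, w, rfl, hne, h1, h2, h3⟩
  · rintro ⟨u, w, rfl, hne, h1, h2, h3⟩; exact ⟨u, w, ⟨hne, h1, h2, h3⟩, rfl⟩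

lemma indist_symm {G : SimpleGraph V} {a b : V} (h : Indistinguishable G a b) :
    Indistinguishable G b a := ⟨h.1.symm, h.2.symm⟩

lemma indist_adj {G : SimpleGraph V} {a b : V} (h : Indistinguishable G a b) : G.Adj a b := by
  have ha : a ∈ insert b (G.neighborSet b) := by
    rw [← h.2]; exact Set.mem_insert _ _
  rw [Set.mem_insert_iff] at ha
  rcases ha with h' | h'
  · exact absurd h' h.1
  · exact (G.mem_neighborSet b a |>.mp h').symm

lemma indist_adj_iff {G : SimpleGraph V} {a b : V} (h : Indistinguishable G a b) {u : V}
    (hua : u ≠ a) (hub : u ≠ b) : G.Adj a u ↔ G.Adj b u := by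
  constructor
  · intro hadj
    have : u ∈ insert a (G.neighborSet a) := Set.mem_insert_of_mem _ hadj
    rw [h.2, Set.mem_insert_iff] at this
    rcases this with h' | h'
    · exact absurd h' hub
    · exact h'
  · intro hadj
    have : u ∈ insert b (G.neighborSet b) := Set.mem_insert_of_mem _ hadj
    rw [← h.2, Set.mem_insert_iff] at this
    rcases this with h' | h'
    · exact absurd h' hua
    · exact h'

lemma indist_elim {G : SimpleGraph V} {a b : V} (h : Indistinguishable G a b) {x : V}
    (hxa : x ≠ a) (hxb : x ≠ b) : Indistinguishable (elimG G x) a b := by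
  refine ⟨h.1, ?_⟩
  ext u
  simp only [Set.mem_insert_iff, SimpleGraph.mem_neighborSet, elimG_adj]
  by_cases hua : u = a
  · subst hua
    simp only [eq_self_iff_true, true_or, true_iff]
    right
    exact ⟨h.1.symm, hxb.symm, hxa.symm, Or.inl (indist_adj h).symm⟩
  · by_cases hub : u = b
    · subst hub
      simp only [eq_self_iff_true, true_or, iff_true]
      right
      exact ⟨h.1, hxa.symm, hxb.symm, Or.inl (indist_adj h)⟩
    · simp only [hua, hub, false_or]
      have h1 : G.Adj a u ↔ G.Adj b u := indist_adj_iff h hua hub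
      have h2 : G.Adj x a ↔ G.Adj x b := by
        rw [G.adj_comm x a, G.adj_comm x b]
        exact indist_adj_iff h hxa hxb
      constructor
      · rintro ⟨hne, hax, hux, hor⟩
        refine ⟨fun e => hub (e.symm), hxb.symm, hux, ?_⟩
        rcases hor with h' | ⟨h3, h4⟩
        · exact Or.inl (h1.mp h')
        · exact Or.inr ⟨h2.mp h3, h4⟩
      · rintro ⟨hne, hbx, hux, hor⟩
        refine ⟨fun e => hua (e.symm), hxa.symm, hux, ?_⟩
        rcases hor with h' | ⟨h3, h4⟩
        · exact Or.inl (h1.mpr h')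
        · exact Or.inr ⟨h2.mpr h3, h4⟩

lemma sim_elimG_adj {G : SimpleGraph V} {v : V} (hs : IsSimplicial G v) (u w : V) :
    (elimG G v).Adj u w ↔ u ≠ w ∧ u ≠ v ∧ w ≠ v ∧ G.Adj u w := by
  rw [elimG_adj]
  constructor
  · rintro ⟨huw, huv, hwv, h | ⟨h1, h2⟩⟩
    · exact ⟨huw, huv, hwv, h⟩
    · exact ⟨huw, huv, hwv, hs u w h1 h2 huw⟩
  · rintro ⟨huw, huv, hwv, h⟩
    exact ⟨huw, huv, hwv, Or.inl h⟩

lemma sim_def_empty {G : SimpleGraph V} {v : V} (hs : IsSimplicial G v) :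
    deficiencyFinset G v = ∅ := by
  rw [Finset.eq_empty_iff_forall_notMem]
  intro e he
  rw [mem_deficiency] at he
  obtain ⟨u, w, _, huw, h1, h2, h3⟩ := he
  exact h3 (hs u w h1 h2 huw)

lemma sim_elim {G : SimpleGraph V} {v : V} (hs : IsSimplicial G v) {x : V} (hxv : x ≠ v) :
    IsSimplicial (elimG G x) v := by
  intro u w hu hw huw
  rw [elimG_adj] at hu hw
  obtain ⟨hvu, hvx, hux, hu4⟩ := hu
  obtain ⟨hvw, -, hwx, hw4⟩ := hw
  refine ⟨huw, hux, hwx, ?_⟩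
  rcases hu4 with h1 | ⟨h1, h1'⟩
  · rcases hw4 with h2 | ⟨h2, h2'⟩
    · exact Or.inl (hs u w h1 h2 huw)
    · have : G.Adj u x := hs u x h1 h2.symm hux
      exact Or.inr ⟨this.symm, h2'⟩
  · rcases hw4 with h2 | ⟨h2, h2'⟩
    · have : G.Adj w x := hs w x h2 h1.symm hwx
      exact Or.inr ⟨h1', this.symm⟩
    · exact Or.inr ⟨h1', h2'⟩

lemma sim_elim_comm {G : SimpleGraph V} {v : V} (hs : IsSimplicial G v) {x : V} (hxv : x ≠ v) :
    elimG (elimG G v) x = elimG (elimG G x) v := by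
  have hs' : IsSimplicial (elimG G x) v := sim_elim hs hxv
  ext u w
  rw [elimG_adj, sim_elimG_adj hs']
  constructor
  · rintro ⟨huw, hux, hwx, h | ⟨h1, h2⟩⟩
    · rw [sim_elimG_adj hs] at h
      exact ⟨huw, h.2.1, h.2.2.1, (elimG_adj G x u w).mpr ⟨huw, hux, hwx, Or.inl h.2.2.2⟩⟩
    · rw [sim_elimG_adj hs] at h1 h2
      exact ⟨huw, h1.2.2.1, h2.2.2.1,
        (elimG_adj G x u w).mpr ⟨huw, hux, hwx, Or.inr ⟨h1.2.2.2, h2.2.2.2⟩⟩⟩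
  · rintro ⟨huw, huv, hwv, h⟩
    rw [elimG_adj] at h
    obtain ⟨-, hux, hwx, h⟩ := h
    refine ⟨huw, hux, hwx, ?_⟩
    rcases h with h | ⟨h1, h2⟩
    · exact Or.inl ((sim_elimG_adj hs u w).mpr ⟨huw, huv, hwv, h⟩)
    · exact Or.inr ⟨(sim_elimG_adj hs x u).mpr ⟨Ne.symm hux, hxv, huv, h1⟩,
        (sim_elimG_adj hs x w).mpr ⟨Ne.symm hwx, hxv, hwv, h2⟩⟩

lemma sim_def_sub {G : SimpleGraph V} {v : V} (hs : IsSimplicial G v) (x : V) :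
    deficiencyFinset (elimG G v) x ⊆ deficiencyFinset G x := by
  intro e he
  rw [mem_deficiency] at he ⊢
  obtain ⟨u, w, rfl, huw, h1, h2, h3⟩ := he
  rw [sim_elimG_adj hs] at h1 h2
  refine ⟨u, w, rfl, huw, h1.2.2.2, h2.2.2.2, fun hadj => h3 ?_⟩
  exact (sim_elimG_adj hs u w).mpr ⟨huw, h1.2.2.1, h2.2.2.1, hadj⟩

lemma fill_erase {v : V} : ∀ (L : List V) (H : SimpleGraph V),
    IsSimplicial H v → v ∈ L → fillList (elimG H v) (L.erase v) ≤ fillList H L := by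
  intro L
  induction L with
  | nil => intro H _ hv; simp at hv
  | cons x xs ih =>
    intro H hsim hv
    by_cases hxv : x = v
    · subst hxv
      rw [List.erase_cons_head]
      simp only [fillList, sim_def_empty hsim, Finset.card_empty, zero_add, le_refl]
    · have herase : (x :: xs).erase v = x :: xs.erase v := by
        rw [List.erase_cons_tail]
        simp [hxv]
      have hvxs : v ∈ xs := by
        rcases List.mem_cons.mp hv with h' | h'
        · exact absurd h'.symm hxv
        · exact h'
      rw [herase]
      simp only [fillList]
      have h1 : (deficiencyFinset (elimG H v) x).card ≤ (deficiencyFinset H x).card :=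
        Finset.card_le_card (sim_def_sub hsim x)
      have h2 : fillList (elimG (elimG H v) x) (xs.erase v) ≤ fillList (elimG H x) xs := by
        rw [sim_elim_comm hsim hxv]
        exact ih (elimG H x) (sim_elim hsim hxv) hvxs
      omega

lemma indist_simplicial {G : SimpleGraph V} {a b : V} (h : Indistinguishable G a b) :
    IsSimplicial (elimG G a) b := by
  intro u w hu hw huw
  rw [elimG_adj] at hu hw
  obtain ⟨hbu, hba, hua, hu4⟩ := hu
  obtain ⟨hbw, -, hwa, hw4⟩ := hw
  have hau : G.Adj a u := by
    rcases hu4 with h' | ⟨-, h'⟩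
    · exact (indist_adj_iff h hua (Ne.symm hbu)).mpr h'
    · exact h'
  have haw : G.Adj a w := by
    rcases hw4 with h' | ⟨-, h'⟩
    · exact (indist_adj_iff h hwa (Ne.symm hbw)).mpr h'
    · exact h'
  exact ⟨huw, hua, hwa, Or.inr ⟨hau, haw⟩⟩

lemma indist_def_eq {G : SimpleGraph V} {a b : V} (h : Indistinguishable G a b) :
    deficiencyFinset G a = deficiencyFinset G b := by
  have key : ∀ (a b : V), Indistinguishable G a b →
      deficiencyFinset G a ⊆ deficiencyFinset G b := by
    intro a b h e he
    rw [mem_deficiency] at he ⊢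
    obtain ⟨u, w, rfl, huw, h1, h2, h3⟩ := he
    have hua : u ≠ a := h1.ne'
    have hwa : w ≠ a := h2.ne'
    have hub : u ≠ b := by
      rintro rfl
      exact h3 ((indist_adj_iff h hwa huw.symm).mp h2)
    have hwb : w ≠ b := by
      rintro rfl
      exact h3 (((indist_adj_iff h hua huw).mp h1).symm)
    exact ⟨u, w, rfl, huw, (indist_adj_iff h hua hub).mp h1,
      (indist_adj_iff h hwa hwb).mp h2, h3⟩
  exact Finset.Subset.antisymm (key a b h) (key b a (indist_symm h))

lemma indist_elim2_adj {G : SimpleGraph V} {a b : V} (h : Indistinguishable G a b) (u w : V) :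
    (elimG (elimG G a) b).Adj u w ↔
      u ≠ w ∧ u ≠ a ∧ u ≠ b ∧ w ≠ a ∧ w ≠ b ∧
        (G.Adj u w ∨ (G.Adj a u ∧ G.Adj a w)) := by
  rw [sim_elimG_adj (indist_simplicial h), elimG_adj]
  constructor
  · rintro ⟨huw, hub, hwb, -, hua, hwa, h4⟩
    exact ⟨huw, hua, hub, hwa, hwb, h4⟩
  · rintro ⟨huw, hua, hub, hwa, hwb, h4⟩
    exact ⟨huw, hub, hwb, huw, hua, hwa, h4⟩

lemma indist_elim2_comm {G : SimpleGraph V} {a b : V} (h : Indistinguishable G a b) :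
    elimG (elimG G a) b = elimG (elimG G b) a := by
  ext u w
  rw [indist_elim2_adj h, indist_elim2_adj (indist_symm h)]
  constructor
  · rintro ⟨huw, hua, hub, hwa, hwb, h4⟩
    refine ⟨huw, hub, hua, hwb, hwa, ?_⟩
    rcases h4 with h' | ⟨h1, h2⟩
    · exact Or.inl h'
    · exact Or.inr ⟨(indist_adj_iff h hua hub).mp h1, (indist_adj_iff h hwa hwb).mp h2⟩
  · rintro ⟨huw, hub, hua, hwb, hwa, h4⟩
    refine ⟨huw, hua, hub, hwa, hwb, ?_⟩
    rcases h4 with h' | ⟨h1, h2⟩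
    · exact Or.inl h'
    · exact Or.inr ⟨(indist_adj_iff h hua hub).mpr h1, (indist_adj_iff h hwa hwb).mpr h2⟩

lemma indist_swap_fill {G : SimpleGraph V} {a b : V} (h : Indistinguishable G a b)
    (M : List V) : fillList G (a :: b :: M) = fillList G (b :: a :: M) := by
  simp only [fillList]
  rw [indist_def_eq h, sim_def_empty (indist_simplicial h),
    sim_def_empty (indist_simplicial (indist_symm h)), indist_elim2_comm h]

lemma main_aux {a b : V} : ∀ (L : List V) (H : SimpleGraph V),
    Indistinguishable H a b → a ∈ L → b ∈ L →
    ∃ L1 L2 : List V, (L1 ++ a :: b :: L2).Perm L ∧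
      fillList H (L1 ++ a :: b :: L2) ≤ fillList H L := by
  intro L
  induction L with
  | nil => intro H _ ha _; simp at ha
  | cons x xs ih =>
    intro H h ha hb
    by_cases hxa : x = a
    · subst hxa
      have hbxs : b ∈ xs := by
        rcases List.mem_cons.mp hb with h' | h'
        · exact absurd h'.symm h.1
        · exact h'
      refine ⟨[], xs.erase b, ?_, ?_⟩
      · exact ((List.perm_cons_erase hbxs).symm).cons x
      · simp only [List.nil_append, fillList, sim_def_empty (indist_simplicial h),
          Finset.card_empty, zero_add]
        exact Nat.add_le_add_left (fill_erase xs (elimG H x) (indist_simplicial h) hbxs) _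
    · by_cases hxb : x = b
      · subst hxb
        have haxs : a ∈ xs := by
          rcases List.mem_cons.mp ha with h' | h'
          · exact absurd h'.symm hxa
          · exact h'
        refine ⟨[], xs.erase a, ?_, ?_⟩
        · simp only [List.nil_append]
          exact (List.Perm.swap x a _).trans (((List.perm_cons_erase haxs).symm).cons x)
        · have hswap := indist_swap_fill h (xs.erase a)
          simp only [List.nil_append]
          rw [hswap]
          simp only [fillList, sim_def_empty (indist_simplicial (indist_symm h)),
            Finset.card_empty, zero_add]
          exact Nat.add_le_add_left
            (fill_erase xs (elimG H x) (indist_simplicial (indist_symm h)) haxs) _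
      · have haxs : a ∈ xs := by
          rcases List.mem_cons.mp ha with h' | h'
          · exact absurd h'.symm hxa
          · exact h'
        have hbxs : b ∈ xs := by
          rcases List.mem_cons.mp hb with h' | h'
          · exact absurd h'.symm hxb
          · exact h'
        have h' : Indistinguishable (elimG H x) a b :=
          indist_elim h (fun e => hxa e) (fun e => hxb e)
        obtain ⟨L1, L2, hperm, hle⟩ := ih (elimG H x) h' haxs hbxs
        refine ⟨x :: L1, L2, hperm.cons x, ?_⟩
        show fillList H (x :: (L1 ++ a :: b :: L2)) ≤ fillList H (x :: xs)
        simp only [fillList]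
        exact Nat.add_le_add_left hle _

lemma exists_min_ordering (G : SimpleGraph V) :
    ∃ L : List V, IsOrdering L ∧ fillList G L = minFillIn G := by
  have hne : {n | ∃ L : List V, IsOrdering L ∧ fillList G L = n}.Nonempty :=
    ⟨_, (Finset.univ : Finset V).toList,
      ⟨Finset.nodup_toList _, fun v => Finset.mem_toList.mpr (Finset.mem_univ v)⟩, rfl⟩
  exact Nat.sInf_mem hne

end myaux

/-- if `a` and `b` are indistinguishable, there is a minimum fill-in
ordering in which `a` and `b` are eliminated consecutively. -/
theorem stmt_7 (G : SimpleGraph V) (a b : V) (h : Indistinguishable G a b) :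
    ∃ L1 L2 : List V, IsOrdering (L1 ++ a :: b :: L2) ∧
      fillList G (L1 ++ a :: b :: L2) = minFillIn G := by
  obtain ⟨L, hord, hfill⟩ := exists_min_ordering G
  obtain ⟨L1, L2, hperm, hle⟩ := main_aux L G h (hord.2 a) (hord.2 b)
  have hord' : IsOrdering (L1 ++ a :: b :: L2) :=
    ⟨hperm.nodup_iff.mpr hord.1, fun v => hperm.mem_iff.mpr (hord.2 v)⟩
  refine ⟨L1, L2, hord', le_antisymm ?_ ?_⟩
  · exact hle.trans hfill.le
  · exact Nat.sInf_le ⟨L1 ++ a :: b :: L2, hord', rfl⟩
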